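/- Let n ≥ 1 be an integer satisfying n ≡ 5 or 9 (mod 12), or n ≡ 4 or 10 (mod 18), or n ≡ 15 or 23 (mod 24). Then there is no splitting ℤ_{5n+1} = (M,S) with |S| = n for M = {-2,-1,1,2,3}, and also none for M = {-1,1,2,3,4}. (Equivalently, neither the (3,2,n)-quasi-cross nor the (4,1,n)-quasi-cross lattice tiles ℝⁿ for such n.) -/

import Mathlib

/-- `(M, S)` is a splitting of `ℤ_q`: `M ⊆ ℤ \ {0}`, and the products `m·s`
(for `m ∈ M`, `s ∈ S`) are pairwise distinct and cover exactly the nonzero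
elements of `ZMod q`. -/
def IsSplitting (q : ℕ) (M : Finset ℤ) (S : Finset (ZMod q)) : Prop :=
  (0 : ℤ) ∉ M ∧
  Set.InjOn (fun p : ℤ × ZMod q => (p.1 : ZMod q) * p.2) ↑(M ×ˢ S) ∧
  (fun p : ℤ × ZMod q => (p.1 : ZMod q) * p.2) '' ↑(M ×ˢ S) = {a : ZMod q | a ≠ 0}

lemma split_count (q p : ℕ) [NeZero q] (hp : p.Prime) (hpq : p ∣ q)
    (M : Finset ℤ) (S : Finset (ZMod q)) (h : IsSplitting q M S) :
    q / p - 1 =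
      (M.filter (fun m => (p:ℤ) ∣ m)).card * S.card +
      (M.filter (fun m => ¬ (p:ℤ) ∣ m)).card *
        (S.filter (fun s => ZMod.castHom hpq (ZMod p) s = 0)).card := by
  haveI : Fact p.Prime := ⟨hp⟩
  obtain ⟨h0, hinj, himg⟩ := h
  set f : ℤ × ZMod q → ZMod q := fun z => (z.1 : ZMod q) * z.2 with hf
  set π : ZMod q →+* ZMod p := ZMod.castHom hpq (ZMod p) with hπ
  have hqpos : 0 < q := Nat.pos_of_ne_zero (NeZero.ne q)
  -- the image finset is univ \ {0}
  have himg' : (M ×ˢ S).image f = Finset.univ \ {0} := by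
    apply Finset.coe_injective
    rw [Finset.coe_image, himg]
    ext a
    simp
  -- key fact: π a = 0 ↔ p ∣ a.val
  have hker : ∀ a : ZMod q, π a = 0 ↔ p ∣ a.val := by
    intro a
    rw [hπ, ZMod.castHom_apply, ← ZMod.natCast_val, ZMod.natCast_eq_zero_iff]
  -- count of nonzero kernel elements
  have hdivpred : (q - 1) / p = q / p - 1 := by
    obtain ⟨t, rfl⟩ := hpq
    cases t with
    | zero => simp at hqpos
    | succ t =>
      have e1 : p * (t + 1) - 1 = (p - 1) + p * t := by
        have h1 : p * (t + 1) = p * t + p := by ring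
        have h2 := hp.two_le
        omega
      rw [e1, Nat.add_mul_div_left _ _ hp.pos, Nat.div_eq_of_lt (by have := hp.two_le; omega),
        Nat.mul_div_cancel_left _ hp.pos]
      omega
  have hcount : ((Finset.univ \ {0} : Finset (ZMod q)).filter (fun a => π a = 0)).card
      = q / p - 1 := by
    rw [← hdivpred, ← Nat.Ioc_filter_dvd_card_eq_div (q - 1) p]
    apply Finset.card_nbij' (fun a => ZMod.val a) (fun x => (x : ZMod q))
    · intro a ha
      simp only [Finset.mem_coe, Finset.mem_filter, Finset.mem_sdiff, Finset.mem_univ, true_and,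
        Finset.mem_singleton, Finset.mem_Ioc] at ha ⊢
      have hv : a.val < q := ZMod.val_lt a
      have hv0 : a.val ≠ 0 := by simpa [ZMod.val_eq_zero] using ha.1
      exact ⟨⟨by omega, by omega⟩, (hker a).1 ha.2⟩
    · intro x hx
      simp only [Finset.mem_coe, Finset.mem_filter, Finset.mem_Ioc, Finset.mem_sdiff, Finset.mem_univ,
        true_and, Finset.mem_singleton] at hx ⊢
      have hxq : x < q := by omega
      have hv : ((x : ZMod q)).val = x := ZMod.val_natCast_of_lt hxq
      refine ⟨fun h' => ?_, ?_⟩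
      · rw [h', ZMod.val_zero] at hv
        omega
      · rw [hker, hv]
        exact hx.2
    · intro a _
      simp [ZMod.natCast_val, ZMod.cast_id]
    · intro x hx
      simp only [Finset.mem_coe, Finset.mem_filter, Finset.mem_Ioc] at hx
      exact ZMod.val_natCast_of_lt (by omega)
  -- transfer to count over M ×ˢ S
  have htrans : ((M ×ˢ S).filter (fun z => π (f z) = 0)).card = q / p - 1 := by
    rw [← hcount, ← himg', Finset.filter_image]
    rw [Finset.card_image_of_injOn (hinj.mono (by exact_mod_cast Finset.filter_subset _ _))]
  -- expand the left side as a sum over M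
  have hsum : ((M ×ˢ S).filter (fun z => π (f z) = 0)).card
      = ∑ m ∈ M, (S.filter (fun s => π ((m : ZMod q) * s) = 0)).card := by
    rw [Finset.card_filter, Finset.sum_product]
    congr 1
    ext m
    rw [Finset.card_filter]
  have hterm : ∀ m : ℤ, ∀ s : ZMod q,
      (π ((m : ZMod q) * s) = 0) ↔ ((p:ℤ) ∣ m ∨ π s = 0) := by
    intro m s
    rw [map_mul, map_intCast, mul_eq_zero, ZMod.intCast_zmod_eq_zero_iff_dvd]
  have hsum2 : ∑ m ∈ M, (S.filter (fun s => π ((m : ZMod q) * s) = 0)).card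
      = (M.filter (fun m => (p:ℤ) ∣ m)).card * S.card +
        (M.filter (fun m => ¬ (p:ℤ) ∣ m)).card *
          (S.filter (fun s => π s = 0)).card := by
    rw [← Finset.sum_filter_add_sum_filter_not M (fun m => (p:ℤ) ∣ m)]
    congr 1
    · rw [Finset.sum_congr rfl (fun m hm => ?_), Finset.sum_const, smul_eq_mul]
      rw [Finset.mem_filter] at hm
      rw [Finset.filter_true_of_mem (fun s _ => (hterm m s).2 (Or.inl hm.2))]
    · rw [Finset.sum_congr rfl (fun m hm => ?_), Finset.sum_const, smul_eq_mul]
      rw [Finset.mem_filter] at hm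
      congr 1
      ext s
      simp only [Finset.mem_filter, hterm m s]
      tauto
  rw [← htrans, hsum, hsum2]

lemma no_split_aux (n : ℕ) (hn : 1 ≤ n)
    (hmod : n % 12 = 5 ∨ n % 12 = 9 ∨ n % 18 = 4 ∨ n % 18 = 10 ∨
            n % 24 = 15 ∨ n % 24 = 23) (M : Finset ℤ)
    (h2a : (M.filter (fun m => (2:ℤ) ∣ m)).card = 2)
    (h2b : (M.filter (fun m => ¬ (2:ℤ) ∣ m)).card = 3)
    (h3a : (M.filter (fun m => (3:ℤ) ∣ m)).card = 1)
    (h3b : (M.filter (fun m => ¬ (3:ℤ) ∣ m)).card = 4) :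
    ¬ ∃ S : Finset (ZMod (5 * n + 1)), IsSplitting (5 * n + 1) M S ∧ S.card = n := by
  rintro ⟨S, hS, hcard⟩
  haveI : NeZero (5 * n + 1) := ⟨by omega⟩
  have case2 : n % 2 = 1 → False := by
    intro hpar
    have hdvd : 2 ∣ 5 * n + 1 := by omega
    have key := split_count (5 * n + 1) 2 Nat.prime_two hdvd M S hS
    push_cast at key
    rw [h2a, h2b, hcard] at key
    set Z := (S.filter (fun s => ZMod.castHom hdvd (ZMod 2) s = 0)).card with hZ
    omega
  have case3 : n % 3 = 1 → ¬ (n % 2 = 1) → False := by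
    intro hpar _
    have hdvd : 3 ∣ 5 * n + 1 := by omega
    have key := split_count (5 * n + 1) 3 Nat.prime_three hdvd M S hS
    push_cast at key
    rw [h3a, h3b, hcard] at key
    set Z := (S.filter (fun s => ZMod.castHom hdvd (ZMod 3) s = 0)).card with hZ
    rcases hmod with h|h|h|h|h|h <;> omega
  rcases hmod with h|h|h|h|h|h
  · exact case2 (by omega)
  · exact case2 (by omega)
  · exact case3 (by omega) (by omega)
  · exact case3 (by omega) (by omega)
  · exact case2 (by omega)
  · exact case2 (by omega)

theorem stmt_12 (n : ℕ) (hn : 1 ≤ n)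
    (hmod : n % 12 = 5 ∨ n % 12 = 9 ∨ n % 18 = 4 ∨ n % 18 = 10 ∨
            n % 24 = 15 ∨ n % 24 = 23) :
    (¬ ∃ S : Finset (ZMod (5 * n + 1)),
        IsSplitting (5 * n + 1) ({-2, -1, 1, 2, 3} : Finset ℤ) S ∧ S.card = n) ∧
    (¬ ∃ S : Finset (ZMod (5 * n + 1)),
        IsSplitting (5 * n + 1) ({-1, 1, 2, 3, 4} : Finset ℤ) S ∧ S.card = n) := by
  constructor
  · exact no_split_aux n hn hmod _ (by decide) (by decide) (by decide) (by decide)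
  · exact no_split_aux n hn hmod _ (by decide) (by decide) (by decide) (by decide)
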